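/- Let λ > 0, u > 0, let m ≥ 1, and let c : ℕ → ℝ satisfy c r > 0 for 1 ≤ r ≤ m. Define W : ℕ → ℝ by W 1 = 1/(c 1) and W (r+1) = ((c (r+1) + λ)/(c (r+1))) · W r + 1/(c (r+1)) for r ≥ 1. Then (1/λ) / ((1/λ + W m) · ((u+λ)/u)) = (u/(u+λ)) · Π_{r=1}^{m} (c r) / (c r + λ). -/

import Mathlib

/-- The user's long-term average freshness in the m-cache system:
(1/λ) / ((1/λ + W m)·((u+λ)/u)) = (u/(u+λ)) · Π_{r=1}^{m} (c r)/(c r + λ). -/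
theorem user_freshness_multi (lam u : ℝ) (hlam : 0 < lam) (hu : 0 < u)
    (m : ℕ) (hm : 1 ≤ m)
    (c : ℕ → ℝ) (hc : ∀ r, 1 ≤ r → r ≤ m → 0 < c r)
    (W : ℕ → ℝ) (hW1 : W 1 = 1 / c 1)
    (hWrec : ∀ r, 1 ≤ r → W (r + 1) = ((c (r + 1) + lam) / c (r + 1)) * W r + 1 / c (r + 1)) :
    (1 / lam) / ((1 / lam + W m) * ((u + lam) / u)) =
      (u / (u + lam)) * ∏ r ∈ Finset.Icc 1 m, c r / (c r + lam) := by
  have key : ∀ n, 1 ≤ n → n ≤ m →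
      1 / lam + W n = (1 / lam) * ∏ r ∈ Finset.Icc 1 n, (c r + lam) / c r := by
    intro n hn
    induction n, hn using Nat.le_induction with
    | base =>
      intro h1
      have hc1 := hc 1 le_rfl h1
      rw [hW1, Finset.Icc_self, Finset.prod_singleton]
      field_simp
    | succ k hk ih =>
      intro hkm
      have hkm' : k ≤ m := le_trans (Nat.le_succ k) hkm
      have hck := hc (k + 1) (by omega) hkm
      have h2 : 1 / lam + (((c (k+1) + lam) / c (k+1)) * W k + 1 / c (k+1))
          = ((c (k+1) + lam) / c (k+1)) * (1 / lam + W k) := by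
        field_simp
        ring
      rw [hWrec k hk, h2, ih hkm', Finset.prod_Icc_succ_top (by omega : 1 ≤ k + 1)]
      ring
  rw [key m hm le_rfl]
  have hprodpos : ∀ r ∈ Finset.Icc 1 m, (c r + lam) / c r ≠ 0 := by
    intro r hr
    simp only [Finset.mem_Icc] at hr
    have := hc r hr.1 hr.2
    positivity
  have hP : ∏ r ∈ Finset.Icc 1 m, (c r + lam) / c r ≠ 0 := Finset.prod_ne_zero_iff.mpr hprodpos
  have hinv : (∏ r ∈ Finset.Icc 1 m, (c r + lam) / c r)⁻¹
      = ∏ r ∈ Finset.Icc 1 m, c r / (c r + lam) := by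
    rw [← Finset.prod_inv_distrib]
    refine Finset.prod_congr rfl fun r hr => ?_
    simp only [Finset.mem_Icc] at hr
    have := hc r hr.1 hr.2
    rw [inv_div]
  rw [← hinv]
  have hul : u + lam ≠ 0 := by positivity
  set P := ∏ r ∈ Finset.Icc 1 m, (c r + lam) / c r with hPdef
  field_simp
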